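/- Let C₁, ..., C_r be nontrivial finite cyclic groups. Then the wreath length of G = C₁ ≀ (C₂ ≀ (··· ≀ C_r)···) is exactly r; i.e., G is not a homomorphic image of any descending iterated standard wreath product of fewer than r finite cyclic groups. -/

import Mathlib

/-- The automorphism action of `G` on `G → H` by right translation:
`(wrAut H G g) f x = f (x * g)`, so that the semidirect product below has
multiplication `(f₁, g₁)(f₂, g₂) = (f₁ · f₂^{g₁⁻¹}, g₁g₂)` with
`f₂^{g₁⁻¹}(x) = f₂ (x * g₁)`. -/
def wrAut (H G : Type*) [Group H] [Group G] : G →* MulAut (G → H) where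
  toFun g :=
    { toFun := fun f x => f (x * g)
      invFun := fun f x => f (x * g⁻¹)
      left_inv := fun f => funext fun x => by simp [mul_assoc]
      right_inv := fun f => funext fun x => by simp [mul_assoc]
      map_mul' := fun f₁ f₂ => rfl }
  map_one' := MulEquiv.ext fun f => funext fun x => by simp
  map_mul' := fun g₁ g₂ => MulEquiv.ext fun f => funext fun x => by simp [mul_assoc]

/-- The standard (regular) wreath product `H ≀ G`. -/
abbrev Wr (H G : Type*) [Group H] [Group G] := SemidirectProduct (G → H) G (wrAut H G)

/-- The standard wreath product of bundled groups. -/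
def WrGrp (H G : GrpCat.{u}) : GrpCat.{u} := GrpCat.of (Wr H G)

/-- Descending iterated standard wreath product `C₁ ≀ (C₂ ≀ (⋯ ≀ C_r)⋯)`,
given by a head group and the list of remaining groups. -/
def descW : GrpCat.{u} → List GrpCat.{u} → GrpCat.{u}
  | G, [] => G
  | G, H :: t => WrGrp G (descW H t)

/-- Ascending iterated standard wreath product `(⋯(C₁ ≀ C₂) ≀ ⋯) ≀ C_r`,
given by a head group and the list of remaining groups. -/
def ascW : GrpCat.{u} → List GrpCat.{u} → GrpCat.{u}
  | G, [] => G
  | G, H :: t => ascW (WrGrp G H) t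

universe v

open scoped commutatorElement

section Helpers

variable {C V : Type v} [Group C] [Group V]

lemma Wr.mul_left_apply (a b : Wr C V) (z : V) :
    (a * b).left z = a.left z * b.left (z * a.right) := rfl

lemma Wr.commutator_right (u v : Wr C V) :
    ⁅u, v⁆.right = u.right * v.right * u.right⁻¹ * v.right⁻¹ := rfl

lemma Wr.commutator_left_apply (u v : Wr C V) (z : V) :
    ⁅u, v⁆.left z = u.left z * v.left (z * u.right) *
      (u.left (z * (u.right * v.right) * u.right⁻¹))⁻¹ *
      (v.left (z * (u.right * v.right * u.right⁻¹) * v.right⁻¹))⁻¹ := rfl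

end Helpers

section Solv

variable {C V : Type v} [Group C] [Group V]

lemma solvable_step (hC : ∀ a b : C, a * b = b * a) {n : ℕ}
    (hV : derivedSeries V n = ⊥) : derivedSeries (Wr C V) (n + 1) = ⊥ := by
  have hker : derivedSeries (Wr C V) n ≤ (SemidirectProduct.rightHom :
      Wr C V →* V).ker := by
    intro x hx
    have hmap := map_derivedSeries_le_derivedSeries
      (SemidirectProduct.rightHom : Wr C V →* V) n
    have hx' : SemidirectProduct.rightHom x ∈ derivedSeries V n :=
      hmap (Subgroup.mem_map_of_mem _ hx)
    rw [hV, Subgroup.mem_bot] at hx'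
    exact hx'
  rw [derivedSeries_succ, eq_bot_iff]
  refine Subgroup.commutator_le.mpr ?_
  intro g₁ h₁ g₂ h₂
  rw [Subgroup.mem_bot, commutatorElement_eq_one_iff_mul_comm]
  have k₁ : g₁.right = 1 := hker h₁
  have k₂ : g₂.right = 1 := hker h₂
  apply SemidirectProduct.ext
  · funext z
    rw [Wr.mul_left_apply, Wr.mul_left_apply, k₁, k₂, mul_one]
    exact hC _ _
  · show g₁.right * g₂.right = g₂.right * g₁.right
    rw [k₁, k₂]

lemma derived_bot_mono {G : Type v} [Group G] {n m : ℕ}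
    (h : derivedSeries G n = ⊥) (hnm : n ≤ m) : derivedSeries G m = ⊥ := by
  obtain ⟨k, rfl⟩ := Nat.exists_eq_add_of_le hnm
  induction k with
  | zero => exact h
  | succ k ih =>
    show derivedSeries G ((n + k) + 1) = ⊥
    rw [derivedSeries_succ, ih (Nat.le_add_right n k), Subgroup.commutator_bot_left]

end Solv

section Lower

variable {C V : Type v} [Group C] [Group V]

lemma Wr.inv_left_apply (a : Wr C V) (z : V) :
    (a⁻¹).left z = (a.left (z * a.right⁻¹))⁻¹ := rfl

lemma ne_points {y y' : V} (hc : ⁅y, y'⁆ ≠ 1)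
    (hcc : ⁅y, y'⁆ * ⁅y, y'⁆ = 1) :
    y ≠ 1 ∧ y' ≠ 1 ∧ y' * y ≠ 1 ∧ ⁅y, y'⁆ * y ≠ 1 ∧ ⁅y, y'⁆ * y' ≠ 1 ∧
      ⁅y, y'⁆ * y' * y ≠ 1 := by
  refine ⟨?_, ?_, ?_, ?_, ?_, ?_⟩
  · intro h
    exact hc (by rw [commutatorElement_eq_one_iff_mul_comm, h, one_mul, mul_one])
  · intro h
    exact hc (by rw [commutatorElement_eq_one_iff_mul_comm, h, one_mul, mul_one])
  · intro h
    have h1 : y' = y⁻¹ := mul_eq_one_iff_eq_inv.mp h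
    exact hc (by rw [commutatorElement_eq_one_iff_mul_comm, h1]; simp)
  · intro h
    have h1 : ⁅y, y'⁆ = y⁻¹ := mul_eq_one_iff_eq_inv.mp h
    rw [h1] at hcc
    have h3 : y⁻¹ = y := by rw [mul_eq_one_iff_eq_inv, inv_inv] at hcc; exact hcc
    rw [commutatorElement_def] at h1
    rw [h3] at h1
    -- h1 : y * y' * y * y'⁻¹ = y
    have h4 : y * (y' * (y * y'⁻¹)) = y := by rw [← mul_assoc, ← mul_assoc]; exact h1
    have h5 : y' * (y * y'⁻¹) = 1 := mul_eq_left.mp h4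
    have h6 : y * y'⁻¹ = y'⁻¹ := (mul_eq_one_iff_inv_eq.mp h5).symm
    have h7 : y = 1 := mul_eq_right.mp h6
    exact hc (by rw [commutatorElement_eq_one_iff_mul_comm, h7, one_mul, mul_one])
  · intro h
    have h1 : ⁅y, y'⁆ = y'⁻¹ := mul_eq_one_iff_eq_inv.mp h
    rw [h1] at hcc
    have h3 : y'⁻¹ = y' := by rw [mul_eq_one_iff_eq_inv, inv_inv] at hcc; exact hcc
    rw [commutatorElement_def] at h1
    rw [h3] at h1
    -- h1 : y * y' * y⁻¹ * y' = y'
    have h5 : y * y' * y⁻¹ = 1 := mul_eq_right.mp h1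
    have h6 : y * y' = y := by
      have := mul_eq_one_iff_eq_inv.mp h5
      rwa [inv_inv] at this
    have h7 : y' = 1 := mul_eq_left.mp h6
    exact hc (by rw [commutatorElement_eq_one_iff_mul_comm, h7, one_mul, mul_one])
  · intro h
    have key : ⁅y, y'⁆ * y' * y = y * y' := by rw [commutatorElement_def]; group
    rw [key] at h
    have h1 : y = y'⁻¹ := mul_eq_one_iff_eq_inv.mp h
    exact hc (by rw [commutatorElement_eq_one_iff_mul_comm, h1]; simp)

lemma lower_step {t : C} (ht : t ≠ 1) {n : ℕ}
    (hV : derivedSeries V n ≠ ⊥) : derivedSeries (Wr C V) (n + 1) ≠ ⊥ := by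
  classical
  set δ : V → C := fun v => if v = 1 then t else 1 with hδdef
  have hδ1 : δ 1 = t := if_pos rfl
  have hδ : ∀ v : V, v ≠ 1 → δ v = 1 := fun v h => if_neg h
  cases n with
  | zero =>
    have hx : ∃ x : V, x ≠ 1 := by
      by_contra hnx
      push_neg at hnx
      apply hV
      rw [eq_bot_iff]
      intro v _
      rw [Subgroup.mem_bot]
      exact hnx v
    obtain ⟨x, hx⟩ := hx
    intro hbot
    have hXmem : ⁅(⟨δ, 1⟩ : Wr C V), (⟨1, x⟩ : Wr C V)⁆ ∈ derivedSeries (Wr C V) 1 := by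
      rw [derivedSeries_succ, derivedSeries_zero]
      exact Subgroup.commutator_mem_commutator (Subgroup.mem_top _) (Subgroup.mem_top _)
    rw [hbot, Subgroup.mem_bot] at hXmem
    have e := congrFun (congrArg SemidirectProduct.left hXmem) 1
    rw [Wr.commutator_left_apply] at e
    simp only [SemidirectProduct.one_left, Pi.one_apply, one_mul, mul_one, inv_one] at e
    -- e should now say δ 1 * (δ x)⁻¹ = 1 (roughly)
    rw [hδ1, hδ x hx] at e
    simp only [inv_one, mul_one] at e
    exact ht e
  | succ m =>
    intro hbot
    apply hV
    rw [derivedSeries_succ, eq_bot_iff]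
    refine Subgroup.commutator_le.mpr ?_
    intro y hy y' hy'
    rw [Subgroup.mem_bot]
    by_contra hc
    have hab : ∀ a ∈ derivedSeries (Wr C V) (m + 1), ∀ b ∈ derivedSeries (Wr C V) (m + 1),
        a * b = b * a := by
      intro a ha b hb
      have h2 : ⁅a, b⁆ ∈ derivedSeries (Wr C V) (m + 1 + 1) := by
        rw [derivedSeries_succ]
        exact Subgroup.commutator_mem_commutator ha hb
      rw [hbot, Subgroup.mem_bot] at h2
      exact commutatorElement_eq_one_iff_mul_comm.mp h2
    obtain ⟨w, hw, hwr0⟩ := Subgroup.mem_map.mp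
      (derivedSeries_le_map_derivedSeries (f := (SemidirectProduct.rightHom : Wr C V →* V)) SemidirectProduct.rightHom_surjective m hy)
    obtain ⟨w', hw', hw'r0⟩ := Subgroup.mem_map.mp
      (derivedSeries_le_map_derivedSeries (f := (SemidirectProduct.rightHom : Wr C V →* V)) SemidirectProduct.rightHom_surjective m hy')
    have hwr : w.right = y := hwr0
    have hw'r : w'.right = y' := hw'r0
    set c : V := ⁅y, y'⁆ with hcdef
    set β : Wr C V := ⟨δ, 1⟩ with hβ
    have hβl : β.left = δ := rfl
    have hβr : β.right = 1 := rfl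
    set A : Wr C V := ⁅w, w'⁆ with hA
    have hAmem : A ∈ derivedSeries (Wr C V) (m + 1) := by
      rw [hA, derivedSeries_succ]
      exact Subgroup.commutator_mem_commutator hw hw'
    have hAr : A.right = c := by
      rw [hA, Wr.commutator_right, hwr, hw'r, hcdef, commutatorElement_def]
    have hAleft : ∀ z : V, A.left z = w.left z * w'.left (z * y) *
        (w.left (z * c * y'))⁻¹ * (w'.left (z * c))⁻¹ := by
      intro z
      have h1 : z * (y * y') * y⁻¹ = z * c * y' := by
        rw [hcdef, commutatorElement_def]; group
      have h2 : z * (y * y' * y⁻¹) * y'⁻¹ = z * c := by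
        rw [hcdef, commutatorElement_def]; group
      rw [hA, Wr.commutator_left_apply, hwr, hw'r, h1, h2]
    -- constraint 1 : get c * c = 1
    have hA₁mem : β * A * β⁻¹ ∈ derivedSeries (Wr C V) (m + 1) :=
      (derivedSeries_normal _ _).conj_mem A hAmem β
    have hA₁r : (β * A * β⁻¹).right = c := by
      simp only [SemidirectProduct.mul_right, SemidirectProduct.inv_right, hβr, hAr,
        one_mul, mul_one, inv_one]
    have hA₁left : ∀ z : V, (β * A * β⁻¹).left z = δ z * A.left z * (δ (z * c))⁻¹ := by
      intro z
      rw [Wr.mul_left_apply, Wr.mul_left_apply, Wr.inv_left_apply]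
      simp only [hβl, hβr, SemidirectProduct.mul_right, hAr, one_mul, mul_one, inv_one]
    have comm_eq : ∀ a b : Wr C V, a * b = b * a → a.right = c → b.right = c →
        a.left 1 * b.left c = b.left 1 * a.left c := by
      intro a b hab' har hbr
      have h := congrFun (congrArg SemidirectProduct.left hab') 1
      rw [Wr.mul_left_apply, Wr.mul_left_apply, har, hbr, one_mul] at h
      exact h
    have e1 := comm_eq A (β * A * β⁻¹) (hab A hAmem (β * A * β⁻¹) hA₁mem) hAr hA₁r
    rw [hA₁left 1, hA₁left c] at e1
    simp only [hδ1, hδ c hc, one_mul, inv_one, mul_one] at e1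
    -- e1 : A.left 1 * (A.left c * (δ (c*c))⁻¹) = t * A.left 1 * A.left c  (roughly)
    by_cases hcc : c * c = 1
    · -- constraint 2
      have hw₁mem : β * w * β⁻¹ ∈ derivedSeries (Wr C V) m :=
        (derivedSeries_normal _ _).conj_mem w hw β
      have hw₁r : (β * w * β⁻¹).right = y := by
        simp only [SemidirectProduct.mul_right, SemidirectProduct.inv_right, hβr, hwr,
          one_mul, mul_one, inv_one]
      have hw₁left : ∀ z : V, (β * w * β⁻¹).left z = δ z * w.left z * (δ (z * y))⁻¹ := by
        intro z
        rw [Wr.mul_left_apply, Wr.mul_left_apply, Wr.inv_left_apply]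
        simp only [hβl, hβr, SemidirectProduct.mul_right, hwr, one_mul, mul_one, inv_one]
      set A' : Wr C V := ⁅β * w * β⁻¹, w'⁆ with hA'
      have hA'mem : A' ∈ derivedSeries (Wr C V) (m + 1) := by
        rw [hA', derivedSeries_succ]
        exact Subgroup.commutator_mem_commutator hw₁mem hw'
      have hA'r : A'.right = c := by
        rw [hA', Wr.commutator_right, hw₁r, hw'r, hcdef, commutatorElement_def]
      have hA'left : ∀ z : V, A'.left z = (β * w * β⁻¹).left z * w'.left (z * y) *
          ((β * w * β⁻¹).left (z * c * y'))⁻¹ * (w'.left (z * c))⁻¹ := by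
        intro z
        have h1 : z * (y * y') * y⁻¹ = z * c * y' := by
          rw [hcdef, commutatorElement_def]; group
        have h2 : z * (y * y' * y⁻¹) * y'⁻¹ = z * c := by
          rw [hcdef, commutatorElement_def]; group
        rw [hA', Wr.commutator_left_apply, hw₁r, hw'r, h1, h2]
      obtain ⟨n1, n2, n5, n3, n4, n6⟩ := ne_points hc (by rw [← hcdef]; exact hcc)
      rw [← hcdef] at n3 n4 n6
      have e2 := comm_eq A A' (hab A hAmem A' hA'mem) hAr hA'r
      rw [hAleft 1, hAleft c, hA'left 1, hA'left c] at e2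
      simp only [hw₁left] at e2
      simp only [one_mul] at e2
      rw [hcc] at e2
      simp only [one_mul] at e2
      simp only [hδ1, hδ y n1, hδ y' n2, hδ c hc, hδ (c * y) n3, hδ (c * y') n4,
        hδ (y' * y) n5, hδ (c * y' * y) n6, one_mul, mul_one, inv_one] at e2
      simp only [mul_assoc] at e2
      exact absurd (right_eq_mul.mp e2) ht
    · -- c * c ≠ 1 : contradiction directly from e1
      rw [hδ (c * c) hcc] at e1
      simp only [inv_one, mul_one] at e1
      simp only [mul_assoc] at e1
      exact absurd (right_eq_mul.mp e1) ht

end Lower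

section Glue

lemma cyclic_comm {G : Type v} [Group G] (h : IsCyclic G) :
    ∀ a b : G, a * b = b * a := by
  obtain ⟨g, hg⟩ := h.exists_generator
  intro a b
  obtain ⟨m, hm⟩ := Subgroup.mem_zpowers_iff.mp (hg a)
  obtain ⟨k, hk⟩ := Subgroup.mem_zpowers_iff.mp (hg b)
  rw [← hm, ← hk, ← zpow_add, ← zpow_add, add_comm]

lemma descW_solvable : ∀ (l : List GrpCat.{u}) (C : GrpCat.{u}),
    (∀ a b : C, a * b = b * a) → (∀ H ∈ l, ∀ a b : ↥H, a * b = b * a) →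
    derivedSeries ↥(descW C l) (l.length + 1) = ⊥ := by
  intro l
  induction l with
  | nil =>
    intro C hC _
    show derivedSeries ↥C (0 + 1) = ⊥
    rw [derivedSeries_succ, derivedSeries_zero, eq_bot_iff]
    refine Subgroup.commutator_le.mpr ?_
    intro a _ b _
    rw [Subgroup.mem_bot, commutatorElement_eq_one_iff_mul_comm]
    exact hC a b
  | cons H rest ih =>
    intro C hC hl
    show derivedSeries (Wr ↥C ↥(descW H rest)) (rest.length + 1 + 1) = ⊥
    exact solvable_step hC
      (ih H (hl H (List.mem_cons_self)) fun K hK => hl K (List.mem_cons_of_mem H hK))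

lemma descW_not_solvable : ∀ (l : List GrpCat.{u}) (C : GrpCat.{u}),
    Nontrivial ↥C → (∀ H ∈ l, Nontrivial ↥H) →
    derivedSeries ↥(descW C l) l.length ≠ ⊥ := by
  intro l
  induction l with
  | nil =>
    intro C hC _
    show derivedSeries ↥C 0 ≠ ⊥
    rw [derivedSeries_zero]
    intro htop
    obtain ⟨a, ha⟩ := exists_ne (1 : ↥C)
    exact ha (Subgroup.mem_bot.mp (htop ▸ Subgroup.mem_top a))
  | cons H rest ih =>
    intro C hC hl
    obtain ⟨a, ha⟩ := exists_ne (1 : ↥C)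
    show derivedSeries (Wr ↥C ↥(descW H rest)) (rest.length + 1) ≠ ⊥
    exact lower_step ha
      (ih H (hl H (List.mem_cons_self)) fun K hK => hl K (List.mem_cons_of_mem H hK))

end Glue

/-- Wreath length: the least `r ≥ 1` such that `G` is an epimorphic image of a
descending iterated standard wreath product of `r` finite cyclic groups. -/
noncomputable def wl (G : Type u) [Group G] : ℕ :=
  sInf {r | ∃ (C : GrpCat.{u}) (l : List GrpCat.{u}), r = l.length + 1 ∧
    (Finite C ∧ IsCyclic C) ∧ (∀ H ∈ l, Finite H ∧ IsCyclic H) ∧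
    ∃ π : descW C l →* G, Function.Surjective π}

/-- The wreath length of a descending iterated standard wreath
product of `r` nontrivial finite cyclic groups (head `C₁` and tail list of length
`r - 1`) is exactly `r`: it is not a homomorphic image of a descending iterated
wreath product of fewer than `r` finite cyclic groups. -/
theorem stmt14 (C₁ : GrpCat.{u}) (l : List GrpCat.{u})
    (h : ∀ H ∈ C₁ :: l, Finite H ∧ IsCyclic H ∧ Nontrivial H) :
    wl (descW C₁ l) = l.length + 1 := by
  have hmem : l.length + 1 ∈ {r | ∃ (C : GrpCat.{u}) (l' : List GrpCat.{u}),
      r = l'.length + 1 ∧ (Finite C ∧ IsCyclic C) ∧ (∀ H ∈ l', Finite H ∧ IsCyclic H) ∧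
      ∃ π : descW C l' →* descW C₁ l, Function.Surjective π} := by
    refine ⟨C₁, l, rfl, ?_, ?_, MonoidHom.id _, Function.surjective_id⟩
    · exact ⟨(h C₁ (List.mem_cons_self)).1, (h C₁ (List.mem_cons_self)).2.1⟩
    · intro H hH
      exact ⟨(h H (List.mem_cons_of_mem C₁ hH)).1, (h H (List.mem_cons_of_mem C₁ hH)).2.1⟩
  apply le_antisymm
  · exact Nat.sInf_le hmem
  · refine le_csInf ⟨_, hmem⟩ ?_
    rintro r ⟨C', l', rfl, hC', hl', π, hπ⟩
    by_contra hlt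
    push_neg at hlt
    have hsrc : derivedSeries ↥(descW C' l') (l'.length + 1) = ⊥ :=
      descW_solvable l' C' (cyclic_comm hC'.2) fun H hH => cyclic_comm (hl' H hH).2
    have h1 : derivedSeries ↥(descW C₁ l) (l'.length + 1) = ⊥ := by
      have h2 := derivedSeries_le_map_derivedSeries (f := π) hπ (l'.length + 1)
      rw [hsrc, Subgroup.map_bot] at h2
      exact le_bot_iff.mp h2
    have h3 : derivedSeries ↥(descW C₁ l) l.length = ⊥ :=
      derived_bot_mono h1 (by omega)
    exact descW_not_solvable l C₁ (h C₁ (List.mem_cons_self)).2.2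
      (fun H hH => (h H (List.mem_cons_of_mem C₁ hH)).2.2) h3
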